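/- Let d ≥ 1, let Γ be an additive sub-semigroup of ℕ^{d+1} that generates ℤ^{d+1} as a group, and let F : Γ → ℝ be subadditive and satisfy F(γ) ≥ C·|γ| for all γ ∈ Γ, for some real constant C. Let c : Δ(Γ)° → ℝ be the function defined by c(α) = lim_{k→∞} F((m_k α_k, m_k)) / m_k for any sequence of positive integers m_k → ∞ and α_k ∈ Λ_{m_k}(Γ) with α_k → α. Then c is a convex function on the open convex set Δ(Γ)°, and in particular c is continuous on Δ(Γ)°. -/

import Mathlib

open Filter Topology

/-- The image of a vector of natural numbers in `ℝ^n`. -/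
def natVecR {n : ℕ} (γ : Fin n → ℕ) : Fin n → ℝ := fun i => (γ i : ℝ)

/-- `Σ(Γ)`: the closed convex cone generated by `Γ ⊆ ℕ^n` in `ℝ^n`, i.e. the topological
closure of the set of all finite nonnegative real linear combinations of elements of `Γ`. -/
def coneOf {n : ℕ} (Γ : Set (Fin n → ℕ)) : Set (Fin n → ℝ) :=
  closure { x | ∃ (k : ℕ) (c : Fin k → ℝ) (g : Fin k → (Fin n → ℕ)),
    (∀ i, 0 ≤ c i) ∧ (∀ i, g i ∈ Γ) ∧ x = ∑ i, c i • natVecR (g i) }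

/-- `Δ(Γ) = {x ∈ ℝ^d : (x,1) ∈ Σ(Γ)}`. -/
def deltaOf {d : ℕ} (Γ : Set (Fin (d+1) → ℕ)) : Set (Fin d → ℝ) :=
  { x | Fin.snoc x (1 : ℝ) ∈ coneOf Γ }

/-- The algebraic (non-closed) cone generated by `Γ`. -/
def coneS {n : ℕ} (Γ : Set (Fin n → ℕ)) : Set (Fin n → ℝ) :=
  { x | ∃ (k : ℕ) (c : Fin k → ℝ) (g : Fin k → (Fin n → ℕ)),
    (∀ i, 0 ≤ c i) ∧ (∀ i, g i ∈ Γ) ∧ x = ∑ i, c i • natVecR (g i) }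

lemma coneOf_eq {n : ℕ} (Γ : Set (Fin n → ℕ)) : coneOf Γ = closure (coneS Γ) := rfl

lemma coneS_smul {n : ℕ} {Γ : Set (Fin n → ℕ)} {r : ℝ} (hr : 0 ≤ r) {x}
    (hx : x ∈ coneS Γ) : r • x ∈ coneS Γ := by
  obtain ⟨k, c, g, h0, h1, h2⟩ := hx
  exact ⟨k, fun i => r * c i, g, fun i => mul_nonneg hr (h0 i), h1, by
    simp [h2, Finset.smul_sum, smul_smul]⟩

lemma coneS_add {n : ℕ} {Γ : Set (Fin n → ℕ)} {x y}
    (hx : x ∈ coneS Γ) (hy : y ∈ coneS Γ) : x + y ∈ coneS Γ := by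
  obtain ⟨k, c, g, h0, h1, h2⟩ := hx
  obtain ⟨k', c', g', h0', h1', h2'⟩ := hy
  refine ⟨k + k', Fin.append c c', Fin.append g g', ?_, ?_, ?_⟩
  · intro i
    refine Fin.addCases (fun i => ?_) (fun i => ?_) i <;>
      simp [Fin.append_left, Fin.append_right, h0 _, h0' _]
  · intro i
    refine Fin.addCases (fun i => ?_) (fun i => ?_) i <;>
      simp [Fin.append_left, Fin.append_right, h1 _, h1' _]
  · rw [h2, h2', Fin.sum_univ_add]
    congr 1 <;> apply Finset.sum_congr rfl <;> intro i _ <;>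
      simp [Fin.append_left, Fin.append_right]

lemma coneS_convex {n : ℕ} (Γ : Set (Fin n → ℕ)) : Convex ℝ (coneS Γ) := by
  intro x hx y hy a b ha hb _
  exact coneS_add (coneS_smul ha hx) (coneS_smul hb hy)

lemma coneOf_smul {n : ℕ} {Γ : Set (Fin n → ℕ)} {r : ℝ} (hr : 0 ≤ r) {x}
    (hx : x ∈ coneOf Γ) : r • x ∈ coneOf Γ := by
  rw [coneOf_eq] at *
  have h := image_closure_subset_closure_image (s := coneS Γ)
    (f := fun y : Fin n → ℝ => r • y) (continuous_const_smul r)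
  have : r • x ∈ closure ((fun y : Fin n → ℝ => r • y) '' coneS Γ) :=
    h ⟨x, hx, rfl⟩
  refine closure_mono ?_ this
  rintro _ ⟨y, hy, rfl⟩
  exact coneS_smul hr hy

lemma mem_of_mem_interior_closure {n : ℕ} {s : Set (Fin n → ℝ)} (hs : Convex ℝ s) {x}
    (hx : x ∈ interior (closure s)) : x ∈ s := by
  have hspan : affineSpan ℝ (closure s) = ⊤ :=
    (hs.closure.interior_nonempty_iff_affineSpan_eq_top).mp ⟨x, hx⟩
  have hspan' : affineSpan ℝ s = ⊤ := by
    refine top_le_iff.mp ?_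
    rw [← hspan]
    refine affineSpan_le.mpr ?_
    exact closure_minimal (subset_affineSpan ℝ s) (affineSpan ℝ s).closed_of_finiteDimensional
  obtain ⟨y, hy⟩ := hs.interior_nonempty_iff_affineSpan_eq_top.mpr hspan'
  obtain ⟨ε, hε, hball⟩ := Metric.mem_nhds_iff.mp (mem_interior_iff_mem_nhds.mp hx)
  set t : ℝ := ε / (2 * (dist x y + 1)) with ht_def
  have hd : (0:ℝ) ≤ dist x y := dist_nonneg
  have ht : 0 < t := by positivity
  set z := x + t • (x - y) with hz_def
  have hz : z ∈ closure s := by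
    apply hball
    have : dist z x = t * dist x y := by
      rw [dist_eq_norm]
      simp only [hz_def, add_sub_cancel_left, norm_smul, Real.norm_eq_abs,
        abs_of_pos ht, dist_eq_norm]
    rw [Metric.mem_ball, this, ht_def]
    rw [div_mul_eq_mul_div, div_lt_iff₀ (by positivity)]
    nlinarith
  have hcombo := hs.combo_interior_closure_mem_interior hy hz
      (a := t / (1 + t)) (b := 1 / (1 + t)) (by positivity) (by positivity)
      (by field_simp; ring)
  have : (t / (1 + t)) • y + (1 / (1 + t)) • z = x := by
    rw [hz_def]
    have h1t : (1 + t) ≠ 0 := by positivity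
    match_scalars <;> field_simp <;> ring
  rw [this] at hcombo
  exact interior_subset hcombo

lemma snoc_mem_interior {d : ℕ} {Γ : Set (Fin (d+1) → ℕ)} {α : Fin d → ℝ}
    (hα : α ∈ interior (deltaOf Γ)) : Fin.snoc α (1:ℝ) ∈ interior (coneOf Γ) := by
  rw [mem_interior_iff_mem_nhds]
  set f : (Fin (d+1) → ℝ) → (Fin d → ℝ) :=
    fun y => fun i => y i.castSucc / y (Fin.last d) with hf
  have hfc : ContinuousAt f (Fin.snoc α 1) := by
    rw [hf]
    apply continuousAt_pi.mpr
    intro i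
    apply ContinuousAt.div
    · exact (continuous_apply _).continuousAt
    · exact (continuous_apply _).continuousAt
    · simp [Fin.snoc_last]
  have hfval : f (Fin.snoc α 1) = α := by
    funext i; simp [hf, Fin.snoc_last, Fin.snoc_castSucc]
  have h1 : f ⁻¹' (interior (deltaOf Γ)) ∈ 𝓝 (Fin.snoc α (1:ℝ)) := by
    apply hfc.preimage_mem_nhds
    rw [hfval]
    exact isOpen_interior.mem_nhds hα
  have h2 : {y : Fin (d+1) → ℝ | 0 < y (Fin.last d)} ∈ 𝓝 (Fin.snoc α (1:ℝ)) := by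
    have : IsOpen {y : Fin (d+1) → ℝ | 0 < y (Fin.last d)} :=
      isOpen_lt continuous_const (continuous_apply _)
    exact this.mem_nhds (by simp [Fin.snoc_last])
  filter_upwards [h1, h2] with y hy1 hy2
  have hy1' : f y ∈ deltaOf Γ := interior_subset hy1
  have hmem : Fin.snoc (f y) (1:ℝ) ∈ coneOf Γ := hy1'
  have : y = y (Fin.last d) • (Fin.snoc (f y) (1:ℝ) : Fin (d+1) → ℝ) := by
    funext j
    induction j using Fin.lastCases with
    | last => simp [Fin.snoc_last]
    | cast i =>
        simp only [Pi.smul_apply, Fin.snoc_castSucc, hf, smul_eq_mul]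
        field_simp
  rw [this]
  exact coneOf_smul hy2.le hmem

lemma nsmul_mem_Γ {n : ℕ} {Γ : Set (Fin n → ℕ)} (h0 : (0 : Fin n → ℕ) ∈ Γ)
    (hadd : ∀ x ∈ Γ, ∀ y ∈ Γ, x + y ∈ Γ) (r : ℕ) {v} (hv : v ∈ Γ) : r • v ∈ Γ := by
  induction r with
  | zero => simpa using h0
  | succ r ih => rw [succ_nsmul]; exact hadd _ ih _ hv

lemma floor_div_tendsto {a : ℝ} (ha : 0 ≤ a) :
    Tendsto (fun m : ℕ => (⌊(m : ℝ) * a⌋₊ : ℝ) / m) atTop (𝓝 a) := by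
  have hlow : Tendsto (fun m : ℕ => a - 1 / (m:ℝ)) atTop (𝓝 a) := by
    have := tendsto_one_div_atTop_nhds_zero_nat (𝕜 := ℝ)
    simpa using tendsto_const_nhds.sub this
  apply tendsto_of_tendsto_of_tendsto_of_le_of_le' hlow tendsto_const_nhds
  · filter_upwards [eventually_gt_atTop 0] with m hm
    have hm' : (0:ℝ) < m := by exact_mod_cast hm
    rw [le_div_iff₀ hm']
    have h2 := Nat.lt_floor_add_one ((m:ℝ) * a)
    have h3 : (1/(m:ℝ)) * m = 1 := by field_simp
    nlinarith
  · filter_upwards [eventually_gt_atTop 0] with m hm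
    have hm' : (0:ℝ) < m := by exact_mod_cast hm
    rw [div_le_iff₀ hm']
    have := Nat.floor_le (mul_nonneg hm'.le ha)
    nlinarith

lemma existsSeq {d : ℕ} {Γ : Set (Fin (d+1) → ℕ)}
    (h0 : (0 : Fin (d+1) → ℕ) ∈ Γ)
    (hadd : ∀ x ∈ Γ, ∀ y ∈ Γ, x + y ∈ Γ)
    {α : Fin d → ℝ}
    (hS : Fin.snoc α (1:ℝ) ∈ coneS Γ) :
    ∃ (m : ℕ → ℕ) (β : ℕ → Fin d → ℕ),
      (∀ k, 0 < m k) ∧ Tendsto (fun k => m k) atTop atTop ∧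
      (∀ k, Fin.snoc (β k) (m k) ∈ Γ) ∧
      Tendsto (fun k => (fun i => (β k i : ℝ) / (m k : ℝ))) atTop (𝓝 α) := by
  obtain ⟨K, cc, g, hc0, hgΓ, hsum⟩ := hS
  set N : ℕ → (Fin (d+1) → ℕ) := fun m => ∑ i, (⌊(m:ℝ) * cc i⌋₊) • g i with hN
  have hNΓ : ∀ m, N m ∈ Γ := by
    intro m
    exact Finset.sum_induction _ (· ∈ Γ) (fun a b ha hb => hadd a ha b hb) h0
      (fun i _ => nsmul_mem_Γ h0 hadd _ (hgΓ i))
  have hNcoord : ∀ m j, ((N m j : ℝ)) = ∑ i, (⌊(m:ℝ) * cc i⌋₊ : ℝ) * (g i j : ℝ) := by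
    intro m j
    rw [hN]
    simp only [Finset.sum_apply, Pi.smul_apply, smul_eq_mul]
    push_cast
    rfl
  have hcoord : ∀ j, Tendsto (fun m : ℕ => (N m j : ℝ) / m) atTop
      (𝓝 ((Fin.snoc α (1:ℝ) : Fin (d+1) → ℝ) j)) := by
    intro j
    have htarget : (Fin.snoc α (1:ℝ) : Fin (d+1) → ℝ) j = ∑ i, cc i * (g i j : ℝ) := by
      rw [hsum]
      simp [Finset.sum_apply, natVecR]
    rw [htarget]
    have heq : ∀ m : ℕ, (N m j : ℝ) / m
        = ∑ i, ((⌊(m:ℝ) * cc i⌋₊ : ℝ) / m) * (g i j : ℝ) := by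
      intro m
      rw [hNcoord, Finset.sum_div]
      congr 1; funext i; ring
    simp only [heq]
    exact tendsto_finset_sum _ (fun i _ => (floor_div_tendsto (hc0 i)).mul_const _)
  have hlast : Tendsto (fun m : ℕ => (N m (Fin.last d) : ℝ) / m) atTop (𝓝 1) := by
    have := hcoord (Fin.last d)
    simpa using this
  have htopR : Tendsto (fun m : ℕ => (N m (Fin.last d) : ℝ)) atTop atTop := by
    have h := Tendsto.pos_mul_atTop one_pos hlast tendsto_natCast_atTop_atTop
    refine Tendsto.congr' ?_ h
    filter_upwards [eventually_gt_atTop 0] with m hm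
    have hm' : ((m:ℝ)) ≠ 0 := by positivity
    field_simp
  have htopN : Tendsto (fun m : ℕ => N m (Fin.last d)) atTop atTop :=
    tendsto_natCast_atTop_iff.mp htopR
  obtain ⟨K0, hK0⟩ := eventually_atTop.mp (htopN.eventually (eventually_gt_atTop 0))
  set M : ℕ → ℕ := fun k => k + (K0 + 1) with hM
  have hMtop : Tendsto M atTop atTop := tendsto_add_atTop_nat (K0 + 1)
  have hMpos : ∀ k, 0 < M k := fun k => by
    have : M k = k + (K0 + 1) := rfl
    omega
  refine ⟨fun k => N (M k) (Fin.last d), fun k i => N (M k) i.castSucc, ?_, ?_, ?_, ?_⟩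
  · intro k
    refine hK0 (M k) ?_
    have : M k = k + (K0 + 1) := rfl
    omega
  · exact htopN.comp hMtop
  · intro k
    have : (Fin.snoc (fun i => N (M k) i.castSucc) (N (M k) (Fin.last d)) : Fin (d+1) → ℕ)
        = N (M k) := by
      funext j
      induction j using Fin.lastCases with
      | last => simp
      | cast i => simp
    rw [this]; exact hNΓ (M k)
  · rw [tendsto_pi_nhds]
    intro i
    have h1 := (hcoord i.castSucc).comp hMtop
    have h2 := hlast.comp hMtop
    have h3 := h1.div h2 one_ne_zero
    have htarget : (Fin.snoc α (1:ℝ) : Fin (d+1) → ℝ) i.castSucc / 1 = α i := by simp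
    rw [htarget] at h3
    refine Tendsto.congr (fun k => ?_) h3
    simp only [Pi.div_apply, Function.comp]
    have hMk : ((M k : ℕ) : ℝ) ≠ 0 := by
      have := hMpos k; positivity
    have hNk : ((N (M k) (Fin.last d) : ℕ) : ℝ) ≠ 0 := by
      have := hK0 (M k) (by have : M k = k + (K0+1) := rfl; omega)
      positivity
    field_simp

lemma F_nsmul_le {n : ℕ} {Γ : Set (Fin n → ℕ)}
    (h0 : (0 : Fin n → ℕ) ∈ Γ)
    (hadd : ∀ x ∈ Γ, ∀ y ∈ Γ, x + y ∈ Γ)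
    {F : (Fin n → ℕ) → ℝ}
    (hsub : ∀ x ∈ Γ, ∀ y ∈ Γ, F (x + y) ≤ F x + F y)
    (r : ℕ) (hr : 1 ≤ r) {v} (hv : v ∈ Γ) : F (r • v) ≤ r * F v := by
  obtain ⟨s, rfl⟩ := Nat.exists_eq_add_of_le hr
  clear hr
  induction s with
  | zero => simp
  | succ s ih =>
      have h1 : (1 + (s + 1)) • v = (1 + s) • v + v := by
        rw [show 1 + (s + 1) = (1 + s) + 1 by omega, succ_nsmul]
      rw [h1]
      calc F ((1 + s) • v + v) ≤ F ((1 + s) • v) + F v :=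
            hsub _ (nsmul_mem_Γ h0 hadd _ hv) _ hv
        _ ≤ (↑(1 + s) : ℝ) * F v + F v := by linarith [ih]
        _ = (↑(1 + (s + 1)) : ℝ) * F v := by push_cast; ring

/-- The Chebyshev transform `c`, defined on the interior of `Δ(Γ)` as the limit of
`F((m_k α_k, m_k))/m_k` for any sequence `α_k ∈ Λ_{m_k}(Γ)` converging to `α`,
is convex and continuous on the interior of `Δ(Γ)`. -/
theorem chebyshev_convex_continuous (d : ℕ) (hd : 1 ≤ d) (Γ : Set (Fin (d+1) → ℕ))
    (h0 : (0 : Fin (d+1) → ℕ) ∈ Γ)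
    (hadd : ∀ x ∈ Γ, ∀ y ∈ Γ, x + y ∈ Γ)
    (hgen : AddSubgroup.closure
        ((fun γ : Fin (d+1) → ℕ => (fun i => (γ i : ℤ))) '' Γ) = ⊤)
    (F : (Fin (d+1) → ℕ) → ℝ) (C : ℝ)
    (hsub : ∀ x ∈ Γ, ∀ y ∈ Γ, F (x + y) ≤ F x + F y)
    (hlb : ∀ γ ∈ Γ, C * (∑ i, (γ i : ℝ)) ≤ F γ)
    (c : (Fin d → ℝ) → ℝ)
    (hc : ∀ α ∈ interior (deltaOf Γ),
      ∀ (m : ℕ → ℕ) (β : ℕ → Fin d → ℕ),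
        (∀ k, 0 < m k) →
        Tendsto (fun k => m k) atTop atTop →
        (∀ k, Fin.snoc (β k) (m k) ∈ Γ) →
        Tendsto (fun k => (fun i => (β k i : ℝ) / (m k : ℝ))) atTop (nhds α) →
        Tendsto (fun k => F (Fin.snoc (β k) (m k)) / (m k : ℝ)) atTop (nhds (c α))) :
    ConvexOn ℝ (interior (deltaOf Γ)) c ∧ ContinuousOn c (interior (deltaOf Γ)) := by
  classical
  have hconeconv : Convex ℝ (coneOf Γ) := by
    rw [coneOf_eq]; exact (coneS_convex Γ).closure
  have hdconv : Convex ℝ (deltaOf Γ) := by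
    intro x hx y hy a b ha hb hab
    have hx' : Fin.snoc x (1:ℝ) ∈ coneOf Γ := hx
    have hy' : Fin.snoc y (1:ℝ) ∈ coneOf Γ := hy
    have h := hconeconv hx' hy' ha hb hab
    have heq : (Fin.snoc (a • x + b • y) (1:ℝ) : Fin (d+1) → ℝ)
        = a • (Fin.snoc x (1:ℝ) : Fin (d+1) → ℝ) + b • (Fin.snoc y (1:ℝ) : Fin (d+1) → ℝ) := by
      funext j
      induction j using Fin.lastCases with
      | last => simp [hab]
      | cast i => simp
    show Fin.snoc (a • x + b • y) (1:ℝ) ∈ coneOf Γ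
    rw [heq]; exact h
  have hIconv : Convex ℝ (interior (deltaOf Γ)) := hdconv.interior
  have hkey : ∀ α ∈ interior (deltaOf Γ), Fin.snoc α (1:ℝ) ∈ coneS Γ := by
    intro α hα
    exact mem_of_mem_interior_closure (coneS_convex Γ) (snoc_mem_interior hα)
  have hcvx : ConvexOn ℝ (interior (deltaOf Γ)) c := by
    refine ⟨hIconv, ?_⟩
    intro x hx y hy a b ha hb hab
    rcases ha.eq_or_lt with rfl | ha'
    · have hb1 : b = 1 := by linarith
      subst hb1; simp
    rcases hb.eq_or_lt with rfl | hb'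
    · have ha1 : a = 1 := by linarith
      subst ha1; simp
    obtain ⟨m, βx, hmpos, hmtop, hmΓ, hmlim⟩ := existsSeq h0 hadd (hkey x hx)
    obtain ⟨nn, βy, hnpos, hntop, hnΓ, hnlim⟩ := existsSeq h0 hadd (hkey y hy)
    have hFx := hc x hx m βx hmpos hmtop hmΓ hmlim
    have hFy := hc y hy nn βy hnpos hntop hnΓ hnlim
    set z := a • x + b • y with hz
    have hzmem : z ∈ interior (deltaOf Γ) := hIconv hx hy ha hb hab
    set q : ℕ → ℕ := fun k => k + 2 with hq
    set p : ℕ → ℕ := fun k => min (k+1) (max 1 ⌊(q k : ℝ) * a⌋₊) with hp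
    have hqval : ∀ k, q k = k + 2 := fun k => rfl
    have hp1 : ∀ k, 1 ≤ p k := fun k =>
      le_min (by omega) (le_max_left _ _)
    have hplt : ∀ k, p k < q k := fun k => by
      have h1 : p k ≤ k + 1 := min_le_left _ _
      have := hqval k; omega
    have hqpos : ∀ k, (0:ℝ) < (q k : ℝ) := fun k => by
      have := hqval k; positivity
    -- eventually p k = ⌊q k * a⌋₊
    have hev : ∀ᶠ k in atTop, p k = ⌊(q k : ℝ) * a⌋₊ := by
      have hqa : Tendsto (fun k => (q k : ℝ) * a) atTop atTop := by
        apply Tendsto.atTop_mul_const ha'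
        exact tendsto_natCast_atTop_iff.mpr (tendsto_add_atTop_nat 2)
      filter_upwards [hqa.eventually_ge_atTop 1] with k hk
      have hfl1 : 1 ≤ ⌊(q k : ℝ) * a⌋₊ := Nat.le_floor (by exact_mod_cast hk)
      have hfl2 : ⌊(q k : ℝ) * a⌋₊ ≤ k + 1 := by
        have h1 : (q k : ℝ) * a < q k := by
          nlinarith [hqpos k]
        have h2 : ⌊(q k : ℝ) * a⌋₊ < q k := by
          rw [Nat.floor_lt (by positivity)]
          exact_mod_cast h1
        have := hqval k; omega
      rw [hp]
      simp only []
      omega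
    have hptend : Tendsto (fun k => (p k : ℝ) / (q k : ℝ)) atTop (𝓝 a) := by
      have hbase := (floor_div_tendsto ha).comp (tendsto_add_atTop_nat 2)
      refine Tendsto.congr' ?_ hbase
      filter_upwards [hev] with k hk
      simp only [Function.comp]
      rw [hk]
    have hqtend : Tendsto (fun k => ((q k - p k : ℕ) : ℝ) / (q k : ℝ)) atTop (𝓝 b) := by
      have heq : ∀ k, ((q k - p k : ℕ) : ℝ) / (q k : ℝ) = 1 - (p k : ℝ) / (q k : ℝ) := by
        intro k
        rw [Nat.cast_sub (hplt k).le]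
        rw [sub_div, div_self (hqpos k).ne']
      simp only [heq]
      have hba : b = 1 - a := by linarith
      rw [hba]
      exact (tendsto_const_nhds (x := (1:ℝ))).sub hptend
    -- the combined sequence
    set w : ℕ → (Fin (d+1) → ℕ) := fun k =>
      (p k * nn k) • (Fin.snoc (βx k) (m k)) + ((q k - p k) * m k) • (Fin.snoc (βy k) (nn k))
      with hw
    set M : ℕ → ℕ := fun k => q k * (m k * nn k) with hM
    set B : ℕ → Fin d → ℕ := fun k i => w k i.castSucc with hB
    have hwΓ : ∀ k, w k ∈ Γ := fun k =>
      hadd _ (nsmul_mem_Γ h0 hadd _ (hmΓ k)) _ (nsmul_mem_Γ h0 hadd _ (hnΓ k))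
    have hwlast : ∀ k, w k (Fin.last d) = M k := by
      intro k
      obtain ⟨t, ht⟩ := Nat.exists_eq_add_of_le (hplt k).le
      have ht' : q k - p k = t := by omega
      simp only [hw, hM, Pi.add_apply, Pi.smul_apply, smul_eq_mul, Fin.snoc_last, ht']
      rw [ht]
      ring
    have hsnocw : ∀ k, (Fin.snoc (B k) (M k) : Fin (d+1) → ℕ) = w k := by
      intro k
      funext j
      induction j using Fin.lastCases with
      | last => rw [Fin.snoc_last, hwlast]
      | cast i => rw [Fin.snoc_castSucc]
    have hMpos : ∀ k, 0 < M k := fun k =>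
      Nat.mul_pos (by have := hqval k; omega) (Nat.mul_pos (hmpos k) (hnpos k))
    have hMtop : Tendsto M atTop atTop := by
      apply tendsto_atTop_mono _ hmtop
      intro k
      calc m k ≤ m k * nn k := Nat.le_mul_of_pos_right _ (hnpos k)
        _ ≤ q k * (m k * nn k) := Nat.le_mul_of_pos_left _ (by have := hqval k; omega)
    have hwcoord : ∀ k i, (B k i : ℝ) / (M k : ℝ)
        = (p k : ℝ)/(q k) * ((βx k i : ℝ)/(m k)) + ((q k - p k : ℕ) : ℝ)/(q k) * ((βy k i : ℝ)/(nn k)) := by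
      intro k i
      have hBval : B k i = p k * nn k * βx k i + (q k - p k) * m k * βy k i := by
        simp [hB, hw, Fin.snoc_castSucc]
      have hm0 : ((m k : ℕ) : ℝ) ≠ 0 := by have := hmpos k; positivity
      have hn0 : ((nn k : ℕ) : ℝ) ≠ 0 := by have := hnpos k; positivity
      have hq0 : ((q k : ℕ) : ℝ) ≠ 0 := (hqpos k).ne'
      rw [hBval, hM]
      push_cast [Nat.cast_sub (hplt k).le]
      field_simp
    have hBlim : Tendsto (fun k => (fun i => (B k i : ℝ) / (M k : ℝ))) atTop (𝓝 z) := by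
      rw [tendsto_pi_nhds]
      intro i
      have hzi : z i = a * x i + b * y i := by simp [hz]
      rw [hzi]
      have hx_i := tendsto_pi_nhds.mp hmlim i
      have hy_i := tendsto_pi_nhds.mp hnlim i
      have := (hptend.mul hx_i).add (hqtend.mul hy_i)
      refine Tendsto.congr (fun k => ?_) this
      exact (hwcoord k i).symm
    have hFz := hc z hzmem M B hMpos hMtop (fun k => by rw [hsnocw]; exact hwΓ k) hBlim
    have hFz' : Tendsto (fun k => F (w k) / (M k : ℝ)) atTop (𝓝 (c z)) := by
      refine Tendsto.congr (fun k => ?_) hFz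
      rw [hsnocw]
    have hRHS : Tendsto (fun k =>
        (p k : ℝ)/(q k) * (F (Fin.snoc (βx k) (m k)) / (m k : ℝ))
        + ((q k - p k : ℕ) : ℝ)/(q k) * (F (Fin.snoc (βy k) (nn k)) / (nn k : ℝ)))
        atTop (𝓝 (a * c x + b * c y)) :=
      (hptend.mul hFx).add (hqtend.mul hFy)
    have hle : ∀ k, F (w k) / (M k : ℝ)
        ≤ (p k : ℝ)/(q k) * (F (Fin.snoc (βx k) (m k)) / (m k : ℝ))
          + ((q k - p k : ℕ) : ℝ)/(q k) * (F (Fin.snoc (βy k) (nn k)) / (nn k : ℝ)) := by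
      intro k
      have h1 : F (w k) ≤ (p k * nn k : ℕ) * F (Fin.snoc (βx k) (m k))
          + ((q k - p k) * m k : ℕ) * F (Fin.snoc (βy k) (nn k)) := by
        have hs1 := hsub _ (nsmul_mem_Γ h0 hadd (p k * nn k) (hmΓ k))
          _ (nsmul_mem_Γ h0 hadd ((q k - p k) * m k) (hnΓ k))
        have hs2 := F_nsmul_le h0 hadd hsub (p k * nn k)
          (by have := hp1 k; have := hnpos k; exact Nat.one_le_iff_ne_zero.mpr (by positivity))
          (hmΓ k)
        have hs3 := F_nsmul_le h0 hadd hsub ((q k - p k) * m k)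
          (by have h1 := hplt k; have h2 := hmpos k
              exact Nat.one_le_iff_ne_zero.mpr (by
                have : 1 ≤ q k - p k := by omega
                positivity))
          (hnΓ k)
        have hple := (hplt k).le
        push_cast [Nat.cast_sub hple] at hs2 hs3 ⊢
        calc F (w k) ≤ _ := hs1
          _ ≤ _ := by linarith
      have hMR : (0:ℝ) < (M k : ℝ) := by have := hMpos k; positivity
      have h2 : F (w k) / (M k : ℝ)
          ≤ ((p k * nn k : ℕ) * F (Fin.snoc (βx k) (m k))
            + ((q k - p k) * m k : ℕ) * F (Fin.snoc (βy k) (nn k))) / (M k : ℝ) := by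
        gcongr
      refine h2.trans_eq ?_
      have hm0 : ((m k : ℕ) : ℝ) ≠ 0 := by have := hmpos k; positivity
      have hn0 : ((nn k : ℕ) : ℝ) ≠ 0 := by have := hnpos k; positivity
      have hq0 : ((q k : ℕ) : ℝ) ≠ 0 := (hqpos k).ne'
      rw [hM]
      push_cast [Nat.cast_sub (hplt k).le]
      field_simp
    exact le_of_tendsto_of_tendsto' hFz' hRHS hle
  exact ⟨hcvx, hcvx.continuousOn isOpen_interior⟩
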